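/- Let R be a unital ring graded by a group Γ. The following conditions are equivalent: (i) for every graded right ideal I of R there exists a homogeneous idempotent ε ∈ R with ann_r(I) = εR; (ii) for every graded left ideal I of R there exists a homogeneous idempotent ε ∈ R with ann_l(I) = Rε; (iii) for every graded two-sided ideal I of R there exists a homogeneous idempotent ε ∈ R with ann_r(I) = εR. (This is the graded analogue of Clark's lemma on the left-right symmetry of the quasi-Baer condition.) -/
import Mathlib


/-- `I` is a right ideal of `R` (as a subset). -/
def IsRightIdealSet {R : Type*} [Ring R] (I : Set R) : Prop :=
  0 ∈ I ∧ (∀ a ∈ I, ∀ b ∈ I, a + b ∈ I) ∧ (∀ a ∈ I, -a ∈ I) ∧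
    ∀ a ∈ I, ∀ x : R, a * x ∈ I

/-- `I` is a left ideal of `R` (as a subset). -/
def IsLeftIdealSet {R : Type*} [Ring R] (I : Set R) : Prop :=
  0 ∈ I ∧ (∀ a ∈ I, ∀ b ∈ I, a + b ∈ I) ∧ (∀ a ∈ I, -a ∈ I) ∧
    ∀ a ∈ I, ∀ x : R, x * a ∈ I

/-- `I` is a two-sided ideal of `R` (as a subset). -/
def IsTwoSidedIdealSet {R : Type*} [Ring R] (I : Set R) : Prop :=
  IsRightIdealSet I ∧ IsLeftIdealSet I

/-- The right annihilator of a subset `I` of `R`. -/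
def rightAnn {R : Type*} [Ring R] (I : Set R) : Set R :=
  {x : R | ∀ a ∈ I, a * x = 0}

/-- The left annihilator of a subset `I` of `R`. -/
def leftAnn {R : Type*} [Ring R] (I : Set R) : Set R :=
  {x : R | ∀ a ∈ I, x * a = 0}

section GradedClark

variable {Γ : Type*} [AddGroup Γ] [DecidableEq Γ]
  {R : Type*} [Ring R] (𝒜 : Γ → AddSubgroup R) [GradedRing 𝒜]

/-- Condition (i): right annihilators of graded right ideals are generated by
homogeneous idempotents. -/
def GCondR : Prop :=
  ∀ I : Set R, IsRightIdealSet I →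
    (∀ a ∈ I, ∀ γ : Γ, ((DirectSum.decompose 𝒜 a) γ : R) ∈ I) →
    ∃ ε : R, ε * ε = ε ∧ (∃ γ : Γ, ε ∈ 𝒜 γ) ∧
      rightAnn I = {x : R | ∃ y : R, x = ε * y}

/-- Condition (ii): left annihilators of graded left ideals are generated by
homogeneous idempotents. -/
def GCondL : Prop :=
  ∀ I : Set R, IsLeftIdealSet I →
    (∀ a ∈ I, ∀ γ : Γ, ((DirectSum.decompose 𝒜 a) γ : R) ∈ I) →
    ∃ ε : R, ε * ε = ε ∧ (∃ γ : Γ, ε ∈ 𝒜 γ) ∧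
      leftAnn I = {x : R | ∃ y : R, x = y * ε}

/-- Condition (iii): right annihilators of graded two-sided ideals are generated by
homogeneous idempotents. -/
def GCondT : Prop :=
  ∀ I : Set R, IsTwoSidedIdealSet I →
    (∀ a ∈ I, ∀ γ : Γ, ((DirectSum.decompose 𝒜 a) γ : R) ∈ I) →
    ∃ ε : R, ε * ε = ε ∧ (∃ γ : Γ, ε ∈ 𝒜 γ) ∧
      rightAnn I = {x : R | ∃ y : R, x = ε * y}

/-- The mirror of condition (iii): left annihilators of graded two-sided ideals. -/
def GCondTL : Prop :=
  ∀ I : Set R, IsTwoSidedIdealSet I →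
    (∀ a ∈ I, ∀ γ : Γ, ((DirectSum.decompose 𝒜 a) γ : R) ∈ I) →
    ∃ ε : R, ε * ε = ε ∧ (∃ γ : Γ, ε ∈ 𝒜 γ) ∧
      leftAnn I = {x : R | ∃ y : R, x = y * ε}

/-- A homogeneous idempotent lies in the degree-zero component. -/
theorem hom_idem_deg_zero {e : R} (he : e * e = e) {γ : Γ} (hγ : e ∈ 𝒜 γ) :
    e ∈ 𝒜 0 := by
  by_cases h : γ = 0
  · exact h ▸ hγ
  · have h2 : e ∈ 𝒜 (γ + γ) := he ▸ SetLike.mul_mem_graded hγ hγ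
    have hne : γ + γ ≠ γ := fun hh => h (by
      have := add_right_cancel (hh.trans (zero_add γ).symm); exact this)
    have h0 : e = 0 := by
      have hz := DirectSum.decompose_of_mem_ne 𝒜 h2 hne
      rwa [DirectSum.decompose_of_mem_same 𝒜 hγ] at hz
    rw [h0]; exact zero_mem _

theorem decomp_mul_homog_right {b : R} {μ : Γ} (hb : b ∈ 𝒜 μ) :
    ∀ (x : R) (γ : Γ),
      ((DirectSum.decompose 𝒜 (x * b)) (γ + μ) : R) =
        ((DirectSum.decompose 𝒜 x) γ : R) * b := by
  refine DirectSum.Decomposition.inductionOn 𝒜 ?_ ?_ ?_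
  · intro γ; simp
  · intro i m γ
    by_cases h : i = γ
    · subst h
      rw [DirectSum.decompose_of_mem_same 𝒜 (SetLike.mul_mem_graded m.2 hb),
        DirectSum.decompose_of_mem_same 𝒜 m.2]
    · rw [DirectSum.decompose_of_mem_ne 𝒜 (SetLike.mul_mem_graded m.2 hb)
        (fun hh => h (add_right_cancel hh)),
        DirectSum.decompose_of_mem_ne 𝒜 m.2 h, zero_mul]
  · intro m m' hm hm' γ
    rw [add_mul, DirectSum.decompose_add, DirectSum.add_apply, AddSubgroup.coe_add,
      hm, hm', DirectSum.decompose_add, DirectSum.add_apply, AddSubgroup.coe_add, add_mul]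

theorem decomp_mul_homog_left {b : R} {μ : Γ} (hb : b ∈ 𝒜 μ) :
    ∀ (x : R) (γ : Γ),
      ((DirectSum.decompose 𝒜 (b * x)) (μ + γ) : R) =
        b * ((DirectSum.decompose 𝒜 x) γ : R) := by
  refine DirectSum.Decomposition.inductionOn 𝒜 ?_ ?_ ?_
  · intro γ; simp
  · intro i m γ
    by_cases h : i = γ
    · subst h
      rw [DirectSum.decompose_of_mem_same 𝒜 (SetLike.mul_mem_graded hb m.2),
        DirectSum.decompose_of_mem_same 𝒜 m.2]
    · rw [DirectSum.decompose_of_mem_ne 𝒜 (SetLike.mul_mem_graded hb m.2)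
        (fun hh => h (add_left_cancel hh)),
        DirectSum.decompose_of_mem_ne 𝒜 m.2 h, mul_zero]
  · intro m m' hm hm' γ
    rw [mul_add, DirectSum.decompose_add, DirectSum.add_apply, AddSubgroup.coe_add,
      hm, hm', DirectSum.decompose_add, DirectSum.add_apply, AddSubgroup.coe_add, mul_add]

/-- (iii) ⟹ (i): pass from a graded right ideal `I` to the graded two-sided ideal `RI`. -/
theorem gcondR_of_gcondT (h : GCondT 𝒜) : GCondR 𝒜 := by
  intro I hI hgr
  set G : Set R := {x : R | ∃ r : R, ∃ a ∈ I, x = r * a} with hGdef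
  set J : AddSubgroup R := AddSubgroup.closure G with hJdef
  have hIJ : ∀ a ∈ I, a ∈ J := fun a ha =>
    AddSubgroup.subset_closure ⟨1, a, ha, (one_mul a).symm⟩
  have hmulr : ∀ x ∈ J, ∀ s : R, x * s ∈ J := by
    intro x hx s
    refine AddSubgroup.closure_induction ?_ ?_ ?_ ?_ hx
    · rintro c ⟨r, a, ha, rfl⟩
      exact AddSubgroup.subset_closure ⟨r, a * s, hI.2.2.2 a ha s, by rw [mul_assoc]⟩
    · rw [zero_mul]; exact zero_mem J
    · intro c d _ _ hc hd; rw [add_mul]; exact add_mem hc hd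
    · intro c _ hc; rw [neg_mul]; exact neg_mem hc
  have hmull : ∀ x ∈ J, ∀ s : R, s * x ∈ J := by
    intro x hx s
    refine AddSubgroup.closure_induction ?_ ?_ ?_ ?_ hx
    · rintro c ⟨r, a, ha, rfl⟩
      exact AddSubgroup.subset_closure ⟨s * r, a, ha, by rw [mul_assoc]⟩
    · rw [mul_zero]; exact zero_mem J
    · intro c d _ _ hc hd; rw [mul_add]; exact add_mem hc hd
    · intro c _ hc; rw [mul_neg]; exact neg_mem hc
  have hJgr : ∀ x ∈ J, ∀ γ : Γ, ((DirectSum.decompose 𝒜 x) γ : R) ∈ J := by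
    intro x hx
    refine AddSubgroup.closure_induction ?_ ?_ ?_ ?_ hx
    · rintro c ⟨r, a, ha, rfl⟩
      revert r
      refine DirectSum.Decomposition.inductionOn 𝒜 ?_ ?_ ?_
      · intro γ
        rw [zero_mul]
        simp only [DirectSum.decompose_zero, DirectSum.zero_apply, ZeroMemClass.coe_zero]
        exact zero_mem J
      · intro i m γ
        have h1 := decomp_mul_homog_left 𝒜 m.2 a (-i + γ)
        rw [add_neg_cancel_left] at h1
        rw [h1]
        exact AddSubgroup.subset_closure
          ⟨(m : R), _, hgr a ha (-i + γ), rfl⟩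
      · intro m m' hm hm' γ
        rw [add_mul, DirectSum.decompose_add, DirectSum.add_apply, AddSubgroup.coe_add]
        exact add_mem (hm γ) (hm' γ)
    · intro γ
      simp only [DirectSum.decompose_zero, DirectSum.zero_apply, ZeroMemClass.coe_zero]
      exact zero_mem J
    · intro c d _ _ hc hd γ
      rw [DirectSum.decompose_add, DirectSum.add_apply, AddSubgroup.coe_add]
      exact add_mem (hc γ) (hd γ)
    · intro c _ hc γ
      rw [DirectSum.decompose_neg, DFinsupp.neg_apply, AddSubgroup.coe_neg]
      exact neg_mem (hc γ)
  have hann : rightAnn I = rightAnn (J : Set R) := by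
    ext x
    simp only [rightAnn, Set.mem_setOf_eq]
    constructor
    · intro hx b hb
      refine AddSubgroup.closure_induction ?_ ?_ ?_ ?_ hb
      · rintro c ⟨r, a, ha, rfl⟩
        rw [mul_assoc, hx a ha, mul_zero]
      · rw [zero_mul]
      · intro c d _ _ hc hd; rw [add_mul, hc, hd, add_zero]
      · intro c _ hc; rw [neg_mul, hc, neg_zero]
    · intro hx a ha
      exact hx a (hIJ a ha)
  obtain ⟨ε, h1, h2, h3⟩ := h (J : Set R)
    ⟨⟨zero_mem J, fun a ha b hb => add_mem ha hb, fun a ha => neg_mem ha, hmulr⟩,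
     ⟨zero_mem J, fun a ha b hb => add_mem ha hb, fun a ha => neg_mem ha, hmull⟩⟩
    hJgr
  exact ⟨ε, h1, h2, hann.trans h3⟩

/-- Mirror of `gcondR_of_gcondT`: from a graded left ideal `I` to `IR`. -/
theorem gcondL_of_gcondTL (h : GCondTL 𝒜) : GCondL 𝒜 := by
  intro I hI hgr
  set G : Set R := {x : R | ∃ r : R, ∃ a ∈ I, x = a * r} with hGdef
  set J : AddSubgroup R := AddSubgroup.closure G with hJdef
  have hIJ : ∀ a ∈ I, a ∈ J := fun a ha =>
    AddSubgroup.subset_closure ⟨1, a, ha, (mul_one a).symm⟩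
  have hmulr : ∀ x ∈ J, ∀ s : R, x * s ∈ J := by
    intro x hx s
    refine AddSubgroup.closure_induction ?_ ?_ ?_ ?_ hx
    · rintro c ⟨r, a, ha, rfl⟩
      exact AddSubgroup.subset_closure ⟨r * s, a, ha, by rw [mul_assoc]⟩
    · rw [zero_mul]; exact zero_mem J
    · intro c d _ _ hc hd; rw [add_mul]; exact add_mem hc hd
    · intro c _ hc; rw [neg_mul]; exact neg_mem hc
  have hmull : ∀ x ∈ J, ∀ s : R, s * x ∈ J := by
    intro x hx s
    refine AddSubgroup.closure_induction ?_ ?_ ?_ ?_ hx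
    · rintro c ⟨r, a, ha, rfl⟩
      exact AddSubgroup.subset_closure ⟨r, s * a, hI.2.2.2 a ha s, by rw [mul_assoc]⟩
    · rw [mul_zero]; exact zero_mem J
    · intro c d _ _ hc hd; rw [mul_add]; exact add_mem hc hd
    · intro c _ hc; rw [mul_neg]; exact neg_mem hc
  have hJgr : ∀ x ∈ J, ∀ γ : Γ, ((DirectSum.decompose 𝒜 x) γ : R) ∈ J := by
    intro x hx
    refine AddSubgroup.closure_induction ?_ ?_ ?_ ?_ hx
    · rintro c ⟨r, a, ha, rfl⟩
      revert r
      refine DirectSum.Decomposition.inductionOn 𝒜 ?_ ?_ ?_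
      · intro γ
        rw [mul_zero]
        simp only [DirectSum.decompose_zero, DirectSum.zero_apply, ZeroMemClass.coe_zero]
        exact zero_mem J
      · intro i m γ
        have h1 := decomp_mul_homog_right 𝒜 m.2 a (γ - i)
        rw [sub_add_cancel] at h1
        rw [h1]
        exact AddSubgroup.subset_closure
          ⟨(m : R), _, hgr a ha (γ - i), rfl⟩
      · intro m m' hm hm' γ
        rw [mul_add, DirectSum.decompose_add, DirectSum.add_apply, AddSubgroup.coe_add]
        exact add_mem (hm γ) (hm' γ)
    · intro γ
      simp only [DirectSum.decompose_zero, DirectSum.zero_apply, ZeroMemClass.coe_zero]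
      exact zero_mem J
    · intro c d _ _ hc hd γ
      rw [DirectSum.decompose_add, DirectSum.add_apply, AddSubgroup.coe_add]
      exact add_mem (hc γ) (hd γ)
    · intro c _ hc γ
      rw [DirectSum.decompose_neg, DFinsupp.neg_apply, AddSubgroup.coe_neg]
      exact neg_mem (hc γ)
  have hann : leftAnn I = leftAnn (J : Set R) := by
    ext x
    simp only [leftAnn, Set.mem_setOf_eq]
    constructor
    · intro hx b hb
      refine AddSubgroup.closure_induction ?_ ?_ ?_ ?_ hb
      · rintro c ⟨r, a, ha, rfl⟩
        rw [← mul_assoc, hx a ha, zero_mul]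
      · rw [mul_zero]
      · intro c d _ _ hc hd; rw [mul_add, hc, hd, add_zero]
      · intro c _ hc; rw [mul_neg, hc, neg_zero]
    · intro hx a ha
      exact hx a (hIJ a ha)
  obtain ⟨ε, h1, h2, h3⟩ := h (J : Set R)
    ⟨⟨zero_mem J, fun a ha b hb => add_mem ha hb, fun a ha => neg_mem ha, hmulr⟩,
     ⟨zero_mem J, fun a ha b hb => add_mem ha hb, fun a ha => neg_mem ha, hmull⟩⟩
    hJgr
  exact ⟨ε, h1, h2, hann.trans h3⟩

/-- An element all of whose homogeneous components vanish is zero. -/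
theorem eq_zero_of_decompose_eq_zero {x : R}
    (h : ∀ γ : Γ, ((DirectSum.decompose 𝒜 x) γ : R) = 0) : x = 0 := by
  refine (DirectSum.decompose 𝒜).injective ?_
  rw [DirectSum.decompose_zero]
  refine DFinsupp.ext fun γ => Subtype.ext ?_
  simpa using h γ

/-- Crux step (Clark's argument): (iii) for right annihilators implies the
corresponding statement for left annihilators of graded two-sided ideals. -/
theorem gcondTL_of_gcondT (h : GCondT 𝒜) : GCondTL 𝒜 := by
  intro I hI hgr
  set J : Set R := leftAnn I with hJdef
  have hJmem : ∀ x, x ∈ J ↔ ∀ a ∈ I, x * a = 0 := fun x => Iff.rfl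
  have hJideal : IsTwoSidedIdealSet J := by
    refine ⟨⟨?_, ?_, ?_, ?_⟩, ⟨?_, ?_, ?_, ?_⟩⟩
    · intro a ha; rw [zero_mul]
    · intro a ha b hb c hc; rw [add_mul, ha c hc, hb c hc, add_zero]
    · intro a ha c hc; rw [neg_mul, ha c hc, neg_zero]
    · intro a ha x c hc; rw [mul_assoc, ha (x * c) (hI.2.2.2.2 c hc x)]
    · intro a ha; rw [zero_mul]
    · intro a ha b hb c hc; rw [add_mul, ha c hc, hb c hc, add_zero]
    · intro a ha c hc; rw [neg_mul, ha c hc, neg_zero]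
    · intro a ha x c hc; rw [mul_assoc, ha c hc, mul_zero]
  have hJgr : ∀ x ∈ J, ∀ γ : Γ, ((DirectSum.decompose 𝒜 x) γ : R) ∈ J := by
    intro x hx γ a ha
    refine eq_zero_of_decompose_eq_zero 𝒜 (fun η => ?_)
    have hxg : ((DirectSum.decompose 𝒜 x) γ : R) ∈ 𝒜 γ := ((DirectSum.decompose 𝒜 x) γ).2
    have h1 := decomp_mul_homog_left 𝒜 hxg a (-γ + η)
    rw [add_neg_cancel_left] at h1
    rw [h1]
    have hb : ((DirectSum.decompose 𝒜 a) (-γ + η) : R) ∈ 𝒜 (-γ + η) :=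
      ((DirectSum.decompose 𝒜 a) (-γ + η)).2
    have h2 := decomp_mul_homog_right 𝒜 hb x γ
    rw [hx _ (hgr a ha (-γ + η))] at h2
    rw [← h2]
    simp
  obtain ⟨e, he, ⟨γe, hγe⟩, hEq⟩ := h J hJideal hJgr
  have he0 : e ∈ 𝒜 0 := hom_idem_deg_zero 𝒜 he hγe
  refine ⟨1 - e, ?_, ⟨0, sub_mem (SetLike.one_mem_graded 𝒜) he0⟩, ?_⟩
  · rw [sub_mul, one_mul, mul_sub, mul_one, he, sub_self, sub_zero]
  · ext x
    simp only [Set.mem_setOf_eq]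
    constructor
    · intro hx
      have hemem : e ∈ rightAnn J := by rw [hEq]; exact ⟨1, (mul_one e).symm⟩
      have hxe : x * e = 0 := hemem x hx
      exact ⟨x, by rw [mul_sub, mul_one, hxe, sub_zero]⟩
    · rintro ⟨y, rfl⟩ a ha
      have haJ : a ∈ rightAnn J := fun j hj => hj a ha
      rw [hEq] at haJ
      obtain ⟨z, rfl⟩ := haJ
      rw [mul_assoc, ← mul_assoc (1 - e), sub_mul, one_mul, he, sub_self, zero_mul,
        mul_zero]

/-- Mirror crux step: the left-annihilator condition for graded two-sided ideals
implies (iii). -/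
theorem gcondT_of_gcondTL (h : GCondTL 𝒜) : GCondT 𝒜 := by
  intro I hI hgr
  set J : Set R := rightAnn I with hJdef
  have hJideal : IsTwoSidedIdealSet J := by
    refine ⟨⟨?_, ?_, ?_, ?_⟩, ⟨?_, ?_, ?_, ?_⟩⟩
    · intro c hc; rw [mul_zero]
    · intro a ha b hb c hc; rw [mul_add, ha c hc, hb c hc, add_zero]
    · intro a ha c hc; rw [mul_neg, ha c hc, neg_zero]
    · intro a ha x c hc; rw [← mul_assoc, ha c hc, zero_mul]
    · intro c hc; rw [mul_zero]
    · intro a ha b hb c hc; rw [mul_add, ha c hc, hb c hc, add_zero]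
    · intro a ha c hc; rw [mul_neg, ha c hc, neg_zero]
    · intro a ha x c hc; rw [← mul_assoc, ha (c * x) (hI.1.2.2.2 c hc x)]
  have hJgr : ∀ x ∈ J, ∀ γ : Γ, ((DirectSum.decompose 𝒜 x) γ : R) ∈ J := by
    intro x hx γ a ha
    refine eq_zero_of_decompose_eq_zero 𝒜 (fun η => ?_)
    have hxg : ((DirectSum.decompose 𝒜 x) γ : R) ∈ 𝒜 γ := ((DirectSum.decompose 𝒜 x) γ).2
    have h1 := decomp_mul_homog_right 𝒜 hxg a (η - γ)
    rw [sub_add_cancel] at h1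
    rw [h1]
    have hb : ((DirectSum.decompose 𝒜 a) (η - γ) : R) ∈ 𝒜 (η - γ) :=
      ((DirectSum.decompose 𝒜 a) (η - γ)).2
    have h2 := decomp_mul_homog_left 𝒜 hb x γ
    rw [hx _ (hgr a ha (η - γ))] at h2
    rw [← h2]
    simp
  obtain ⟨f, hf, ⟨γf, hγf⟩, hEq⟩ := h J hJideal hJgr
  have hf0 : f ∈ 𝒜 0 := hom_idem_deg_zero 𝒜 hf hγf
  refine ⟨1 - f, ?_, ⟨0, sub_mem (SetLike.one_mem_graded 𝒜) hf0⟩, ?_⟩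
  · rw [sub_mul, one_mul, mul_sub, mul_one, hf, sub_self, sub_zero]
  · ext x
    simp only [Set.mem_setOf_eq]
    constructor
    · intro hx
      have hfmem : f ∈ leftAnn J := by rw [hEq]; exact ⟨1, (one_mul f).symm⟩
      have hfx : f * x = 0 := hfmem x hx
      exact ⟨x, by rw [sub_mul, one_mul, hfx, sub_zero]⟩
    · rintro ⟨y, rfl⟩ a ha
      have haJ : a ∈ leftAnn J := fun j hj => hj a ha
      rw [hEq] at haJ
      obtain ⟨z, rfl⟩ := haJ
      rw [mul_assoc, ← mul_assoc f, mul_sub, mul_one, hf, sub_self, zero_mul, mul_zero]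

theorem gcondT_of_gcondR (h : GCondR 𝒜) : GCondT 𝒜 :=
  fun I hI hgr => h I hI.1 hgr

theorem gcondTL_of_gcondL (h : GCondL 𝒜) : GCondTL 𝒜 :=
  fun I hI hgr => h I hI.2 hgr

end GradedClark

/-- Graded version of Clark's lemma: for a unital `Γ`-graded ring `R`, the following are
equivalent: (i) the right annihilator of every graded right ideal is `εR` for a
homogeneous idempotent `ε`; (ii) the left annihilator of every graded left ideal is `Rε`
for a homogeneous idempotent `ε`; (iii) the right annihilator of every graded two-sided
ideal is `εR` for a homogeneous idempotent `ε`. -/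
theorem graded_quasiBaer_left_right_symmetric
    {Γ : Type*} [AddGroup Γ] [DecidableEq Γ]
    {R : Type*} [Ring R]
    (𝒜 : Γ → AddSubgroup R) [GradedRing 𝒜] :
    ((∀ I : Set R, IsRightIdealSet I →
        (∀ a ∈ I, ∀ γ : Γ, ((DirectSum.decompose 𝒜 a) γ : R) ∈ I) →
        ∃ ε : R, ε * ε = ε ∧ (∃ γ : Γ, ε ∈ 𝒜 γ) ∧
          rightAnn I = {x : R | ∃ y : R, x = ε * y})
      ↔
      (∀ I : Set R, IsLeftIdealSet I →
        (∀ a ∈ I, ∀ γ : Γ, ((DirectSum.decompose 𝒜 a) γ : R) ∈ I) →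
        ∃ ε : R, ε * ε = ε ∧ (∃ γ : Γ, ε ∈ 𝒜 γ) ∧
          leftAnn I = {x : R | ∃ y : R, x = y * ε})) ∧
    ((∀ I : Set R, IsLeftIdealSet I →
        (∀ a ∈ I, ∀ γ : Γ, ((DirectSum.decompose 𝒜 a) γ : R) ∈ I) →
        ∃ ε : R, ε * ε = ε ∧ (∃ γ : Γ, ε ∈ 𝒜 γ) ∧
          leftAnn I = {x : R | ∃ y : R, x = y * ε})
      ↔
      (∀ I : Set R, IsTwoSidedIdealSet I →
        (∀ a ∈ I, ∀ γ : Γ, ((DirectSum.decompose 𝒜 a) γ : R) ∈ I) →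
        ∃ ε : R, ε * ε = ε ∧ (∃ γ : Γ, ε ∈ 𝒜 γ) ∧
          rightAnn I = {x : R | ∃ y : R, x = ε * y})) := by
  constructor
  · exact ⟨fun h => gcondL_of_gcondTL 𝒜 (gcondTL_of_gcondT 𝒜 (gcondT_of_gcondR 𝒜 h)),
      fun h => gcondR_of_gcondT 𝒜 (gcondT_of_gcondTL 𝒜 (gcondTL_of_gcondL 𝒜 h))⟩
  · exact ⟨fun h => gcondT_of_gcondTL 𝒜 (gcondTL_of_gcondL 𝒜 h),
      fun h => gcondL_of_gcondTL 𝒜 (gcondTL_of_gcondT 𝒜 h)⟩
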